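/- arXiv:2112.06157 — 2 statements merged into one kernel-verified Lean document; each statement's English description precedes it below -/
import Mathlib

section
/- Suppose e ∈ F_2^n is the unique solution of weight ω to H e = s, and let I ⊆ [n] with |I| = n-k be such that H_I is invertible. If all nonzero coordinates of e lie in I (i.e. the complement of I restricted to e is zero), then the unique solution e_1 of the linear system H_I e_1 = s equals the projection e_I of e onto I, and in particular wt(e_1) = ω. -/
theorem stmt_5 (n k ω : ℕ) (hkn : k ≤ n)
    (H : Matrix (Fin (n-k)) (Fin n) (ZMod 2)) (s : Fin (n-k) → ZMod 2)
    (e : Fin n → ZMod 2) (he : H.mulVec e = s)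
    (hwt : (Finset.univ.filter fun j => e j ≠ 0).card = ω)
    (huniq : ∀ e' : Fin n → ZMod 2, H.mulVec e' = s →
      (Finset.univ.filter fun j => e' j ≠ 0).card = ω → e' = e)
    (ι : Fin (n-k) → Fin n) (hι : Function.Injective ι)
    (hinv : IsUnit (Matrix.of fun r c => H r (ι c)))
    (hsupp : ∀ j : Fin n, (∀ c, ι c ≠ j) → e j = 0) :
    (∀ e1 : Fin (n-k) → ZMod 2,
      (Matrix.of fun r c => H r (ι c)).mulVec e1 = s → e1 = fun c => e (ι c)) ∧
    (Finset.univ.filter fun c => e (ι c) ≠ 0).card = ω := by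
  have key : (Matrix.of fun r c => H r (ι c)).mulVec (fun c => e (ι c)) = s := by
    funext r
    rw [← he]
    simp only [Matrix.mulVec, dotProduct, Matrix.of_apply]
    rw [← Finset.sum_image (f := fun j => H r j * e j) (g := ι)
      (fun x _ y _ h => hι h)]
    apply Finset.sum_subset (Finset.subset_univ _)
    intro j _ hj
    have : e j = 0 := by
      apply hsupp
      intro c hc
      exact hj (Finset.mem_image.mpr ⟨c, Finset.mem_univ _, hc⟩)
    simp [this]
  constructor
  · intro e1 h1
    exact Matrix.mulVec_injective_iff_isUnit.mpr hinv (h1.trans key.symm)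
  · rw [← hwt]
    apply Finset.card_bij (fun c _ => ι c)
    · intro c hc
      simp only [Finset.mem_filter, Finset.mem_univ, true_and] at hc ⊢
      exact hc
    · intro a _ b _ h; exact hι h
    · intro j hj
      simp only [Finset.mem_filter, Finset.mem_univ, true_and] at hj
      by_contra hcon
      push_neg at hcon
      refine hj (hsupp j fun c hc => hcon c ?_ hc)
      simp only [Finset.mem_filter, Finset.mem_univ, true_and]
      rw [hc]; exact hj
end

section
/- Fix 0 < τ ≤ 1-R < 1 and let q(α) = (1-α)·H(τ/(1-α)) for α ∈ [0, 1-τ). Then q is strictly decreasing in α; consequently the Hybrid-Prange exponent t(δ) = 1 - ( (1-α)H(τ/(1-α)) - (1-R)H(τ/(1-R)) ) / ( 2(H(τ) - (1-R)H(τ/(1-R))) ) with α = (1-δ)R is strictly decreasing in δ and satisfies t(1) = 1/2. -/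
private lemma gmono (τ : ℝ) (hτ0 : 0 < τ) (hτ1 : τ < 1) :
    StrictMonoOn (fun u => u * Real.log u - (u - τ) * Real.log (u - τ)) (Set.Icc τ 1) := by
  apply strictMonoOn_of_deriv_pos (convex_Icc _ _)
  · exact (Real.continuous_mul_log.sub
      (Real.continuous_mul_log.comp (continuous_id.sub continuous_const))).continuousOn
  · intro x hx
    rw [interior_Icc] at hx
    have hx0 : x ≠ 0 := by nlinarith [hx.1]
    have hxτ : x - τ ≠ 0 := sub_ne_zero.2 (ne_of_gt hx.1)
    have h1 : HasDerivAt (fun u : ℝ => u * Real.log u) (Real.log x + 1) x :=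
      Real.hasDerivAt_mul_log hx0
    have h2 : HasDerivAt (fun u : ℝ => (u - τ) * Real.log (u - τ))
        ((Real.log (x - τ) + 1) * 1) x :=
      by have := (Real.hasDerivAt_mul_log hxτ).comp x ((hasDerivAt_id x).sub_const τ); exact this
    have h3 : HasDerivAt (fun u : ℝ => u * Real.log u - (u - τ) * Real.log (u - τ))
        (Real.log x + 1 - (Real.log (x - τ) + 1) * 1) x := h1.sub h2
    rw [h3.deriv]
    have : Real.log (x - τ) < Real.log x := Real.log_lt_log (by linarith [hx.1]) (by linarith)
    linarith

private lemma qval (τ : ℝ) (hτ0 : 0 < τ) (u : ℝ) (hu : τ ≤ u) :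
    u * (-(τ/u * Real.logb 2 (τ/u)) - (1 - τ/u) * Real.logb 2 (1 - τ/u))
      = (u * Real.log u - (u - τ) * Real.log (u - τ) - τ * Real.log τ) / Real.log 2 := by
  rcases eq_or_lt_of_le hu with h | h
  · subst h
    rw [div_self (ne_of_gt hτ0)]
    simp [Real.logb]
  · have hu0 : 0 < u := lt_trans hτ0 h
    have h1 : (1 : ℝ) - τ/u = (u - τ)/u := by field_simp
    rw [h1, Real.logb, Real.logb, Real.log_div (ne_of_gt hτ0) (ne_of_gt hu0),
      Real.log_div (sub_ne_zero.2 (ne_of_gt h)) (ne_of_gt hu0)]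
    have hl2 : Real.log 2 ≠ 0 := ne_of_gt (Real.log_pos (by norm_num))
    field_simp
    ring

theorem stmt_11 (R τ : ℝ) (hR0 : 0 < R) (hR1 : R < 1) (hτ0 : 0 < τ) (hτ : τ ≤ 1 - R) :
    let H : ℝ → ℝ := fun x => -(x * Real.logb 2 x) - (1-x) * Real.logb 2 (1-x)
    let q : ℝ → ℝ := fun α => (1-α) * H (τ/(1-α))
    let t : ℝ → ℝ := fun δ =>
      1 - (q ((1-δ)*R) - (1-R) * H (τ/(1-R))) /
        (2 * (H τ - (1-R) * H (τ/(1-R))))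
    StrictAntiOn q (Set.Ico 0 (1-τ)) ∧ StrictAntiOn t (Set.Icc 0 1) ∧ t 1 = 1/2 := by
  intro H q t
  have hτ1 : τ < 1 := by linarith
  set g : ℝ → ℝ := fun u => u * Real.log u - (u - τ) * Real.log (u - τ) with hg
  have hgm := gmono τ hτ0 hτ1
  have hl2 : (0:ℝ) < Real.log 2 := Real.log_pos (by norm_num)
  have hqf : ∀ α : ℝ, α ≤ 1 - τ → q α = (g (1-α) - τ * Real.log τ) / Real.log 2 := by
    intro α hα
    have := qval τ hτ0 (1-α) (by linarith)
    simpa [q, H, hg, sub_div] using this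
  -- H τ = q 0
  have hq0 : H τ = q 0 := by simp [q]
  have hqR : (1-R) * H (τ/(1-R)) = q R := rfl
  -- positivity of denominator
  have hDpos : 0 < H τ - (1-R) * H (τ/(1-R)) := by
    rw [hq0, hqR, hqf 0 (by linarith), hqf R (by linarith)]
    have h1 : g (1-R) < g (1-0) :=
      hgm (Set.mem_Icc.2 ⟨by linarith, by linarith⟩)
        (Set.mem_Icc.2 ⟨by linarith, by linarith⟩) (by linarith)
    rw [← sub_div]
    exact div_pos (by linarith) hl2
  refine ⟨?_, ?_, ?_⟩
  · -- q strictly decreasing on [0, 1-τ)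
    intro a ha b hb hab
    rw [hqf a (le_of_lt ha.2), hqf b (le_of_lt hb.2)]
    have h1 : g (1-b) < g (1-a) :=
      hgm (Set.mem_Icc.2 ⟨by linarith [hb.2], by linarith [hb.1]⟩)
        (Set.mem_Icc.2 ⟨by linarith [ha.2], by linarith [ha.1]⟩) (by linarith)
    exact div_lt_div_of_pos_right (by linarith) hl2 |>.trans_le le_rfl
  · -- t strictly decreasing on [0,1]
    intro a ha b hb hab
    simp only [t]
    have haR : 0 ≤ a * R := mul_nonneg ha.1 hR0.le
    have hbR : 0 ≤ b * R := mul_nonneg hb.1 hR0.le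
    have haR' : 0 ≤ (1-a) * R := mul_nonneg (by linarith [ha.2]) hR0.le
    have hbR' : 0 ≤ (1-b) * R := mul_nonneg (by linarith [hb.2]) hR0.le
    have hab' : (1-b) * R < (1-a) * R :=
      mul_lt_mul_of_pos_right (by linarith) hR0
    have h1 : q ((1-a)*R) < q ((1-b)*R) := by
      rw [hqf _ (by nlinarith), hqf _ (by nlinarith)]
      have h2 : g (1-(1-a)*R) < g (1-(1-b)*R) :=
        hgm (Set.mem_Icc.2 ⟨by nlinarith, by nlinarith⟩)
          (Set.mem_Icc.2 ⟨by nlinarith, by nlinarith⟩)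
          (by nlinarith)
      exact div_lt_div_of_pos_right (by linarith) hl2
    have hD2 : (0:ℝ) < 2 * (H τ - (1-R) * H (τ/(1-R))) := by linarith
    have h3 := div_lt_div_of_pos_right
      (sub_lt_sub_right h1 ((1-R) * H (τ/(1-R)))) hD2
    linarith
  · -- t 1 = 1/2
    simp only [t]
    have h0 : ((1:ℝ)-1)*R = 0 := by ring
    rw [h0, ← hq0]
    have hD : H τ - (1-R) * H (τ/(1-R)) ≠ 0 := ne_of_gt hDpos
    field_simp
    ring
end
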